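/- (Pentagon identity for the q-exponential, Proposition 2.1.) With a and b as in the context, satisfying a∘b = q·(b∘a), one has the identity of ℂ-linear operators on ℂ[[x,y]]: e_q(−a) ∘ e_q(−b) = e_q(−b) ∘ e_q(−(b∘a)) ∘ e_q(−a). -/

import Mathlib

/-!
Pentagon identity for the q-exponential (Proposition 2.1).

We work on `V = ℂ[[x,y]] = MvPowerSeries (Fin 2) ℂ`.  The operator `opB` is
multiplication by `y`, and `opA q` is multiplication by `x` composed with the
rescaling `y ↦ q·y`; they satisfy `opA q ∘ opB = q • (opB ∘ opA q)` and are
degree-raising.  For a degree-raising operator `T`, the q-exponential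
`e_q(−T) = ∑_{n≥0} (−1)ⁿ Tⁿ/(q;q)_n` has coefficientwise finite sums: its
coefficient at a monomial of total degree `d` only involves `n ≤ d`, which is
how `eqExp` is defined below.
-/

noncomputable section

/-- `(q;q)_n = ∏_{k=1}^{n} (1 - q^k)`. -/
def qPoch (q : ℂ) (n : ℕ) : ℂ := ∏ k ∈ Finset.range n, (1 - q ^ (k + 1))

/-- total degree of a monomial exponent -/
def degOf (ν : Fin 2 →₀ ℕ) : ℕ := ν.sum fun _ k => k

/-- the rescaling `y ↦ q·y`, i.e. the coefficient at `ν` is multiplied by `q^(ν 1)`. -/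
def scaleY (q : ℂ) (f : MvPowerSeries (Fin 2) ℂ) : MvPowerSeries (Fin 2) ℂ :=
  fun ν => q ^ (ν 1) * f ν

/-- `a`: multiplication by `x` composed with the rescaling `y ↦ q y`,
i.e. `(a·f)(x,y) = x·f(x,qy)`. -/
def opA (q : ℂ) (f : MvPowerSeries (Fin 2) ℂ) : MvPowerSeries (Fin 2) ℂ :=
  MvPowerSeries.X 0 * scaleY q f

/-- `b`: multiplication by `y`. -/
def opB (f : MvPowerSeries (Fin 2) ℂ) : MvPowerSeries (Fin 2) ℂ :=
  MvPowerSeries.X 1 * f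

/-- the q-exponential `e_q(−T) = ∑_{n ≥ 0} (−1)ⁿ Tⁿ / (q;q)_n` of a degree-raising
operator `T`, defined by its (finite) coefficientwise sums. -/
def eqExp (q : ℂ) (T : MvPowerSeries (Fin 2) ℂ → MvPowerSeries (Fin 2) ℂ)
    (f : MvPowerSeries (Fin 2) ℂ) : MvPowerSeries (Fin 2) ℂ :=
  fun ν => ∑ n ∈ Finset.range (degOf ν + 1), ((-1 : ℂ) ^ n / qPoch q n) * (T^[n] f) ν

namespace Pent

def cc (q : ℂ) (n : ℕ) : ℂ := (-1) ^ n / qPoch q n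
def TT (k : ℕ) : ℕ := ∑ s ∈ Finset.range k, s

lemma TT_succ (k : ℕ) : TT (k + 1) = TT k + k := Finset.sum_range_succ _ _

section Scalar

variable (q : ℂ)

def CC (M k : ℕ) : ℂ := if k ≤ M then qPoch q M / (qPoch q k * qPoch q (M - k)) else 0

lemma qPoch_zero : qPoch q 0 = 1 := by simp [qPoch]

lemma qPoch_succ (n : ℕ) : qPoch q (n + 1) = qPoch q n * (1 - q ^ (n + 1)) :=
  Finset.prod_range_succ _ _

variable (hq : ∀ n : ℕ, 0 < n → q ^ n ≠ 1)
include hq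

lemma qPoch_ne_zero (n : ℕ) : qPoch q n ≠ 0 := by
  refine Finset.prod_ne_zero_iff.mpr fun k _ => ?_
  intro h
  exact hq (k + 1) (Nat.succ_pos k) (by linear_combination -h)

lemma CC_zero (M : ℕ) : CC q M 0 = 1 := by
  simp [CC, qPoch_zero, div_self (qPoch_ne_zero q hq M)]

lemma CC_self (N : ℕ) : CC q N N = 1 := by
  simp [CC, qPoch_zero, div_self (qPoch_ne_zero q hq N)]

omit hq

lemma CC_of_gt {M k : ℕ} (h : M < k) : CC q M k = 0 := by
  simp [CC, Nat.not_le.mpr h]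

include hq

lemma CC_pascal (N k : ℕ) :
    CC q (N + 1) (k + 1) = CC q N k + q ^ (k + 1) * CC q N (k + 1) := by
  rcases lt_trichotomy k N with hk | rfl | hk
  · rw [CC, if_pos (by omega), CC, if_pos (by omega), CC, if_pos (by omega)]
    have h1 : N + 1 - (k + 1) = N - k := by omega
    have h2 : N - (k + 1) = (N - k) - 1 := by omega
    have h3 : N - k = ((N - k) - 1) + 1 := by omega
    have hpow : q ^ (k + 1) * q ^ (N - k) = q ^ (N + 1) := by
      rw [← pow_add]; congr 1; omega
    have hw : (1 : ℂ) - q ^ (N + 1) = (1 - q ^ (k + 1)) + q ^ (k + 1) * (1 - q ^ (N - k)) := by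
      linear_combination hpow
    have h4 : qPoch q (N - k) = qPoch q ((N - k) - 1) * (1 - q ^ (N - k)) := by
      conv_lhs => rw [h3, qPoch_succ, ← h3]
    rw [h1, h2, qPoch_succ q N, qPoch_succ q k, h4, hw]
    have hA := qPoch_ne_zero q hq N
    have hB := qPoch_ne_zero q hq k
    have hC := qPoch_ne_zero q hq ((N - k) - 1)
    have e1 : (1 : ℂ) - q ^ (k + 1) ≠ 0 := sub_ne_zero.mpr (fun h => (hq (k+1) (by omega) h.symm))
    have e2 : (1 : ℂ) - q ^ (N - k) ≠ 0 := by
      refine sub_ne_zero.mpr (fun h => (hq (N - k) (by omega) h.symm))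
    field_simp
  · have h1 : CC q k (k + 1) = 0 := CC_of_gt q (Nat.lt_succ_self k)
    simp [CC_self q hq, h1]
  · rw [CC_of_gt q (by omega), CC_of_gt q (by omega), CC_of_gt q (by omega)]
    ring

lemma CC_absorb (M k : ℕ) :
    CC q M (k + 1) * qPoch q (k + 1) = CC q M k * qPoch q k * (1 - q ^ (M - k)) := by
  rcases le_or_gt M k with h | h
  · have hMk : M - k = 0 := by omega
    rcases eq_or_lt_of_le h with rfl | h'
    · rw [CC_of_gt q (by omega), CC_self q hq, hMk, pow_zero, sub_self, mul_zero, zero_mul]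
    · rw [CC_of_gt q (by omega), CC_of_gt q h', zero_mul, zero_mul, zero_mul]
  · rw [CC, if_pos (by omega), CC, if_pos (by omega)]
    have h2 : M - k = (M - (k + 1)) + 1 := by omega
    rw [h2, qPoch_succ q (M - (k+1)), qPoch_succ q k]
    have hA := qPoch_ne_zero q hq M
    have hB := qPoch_ne_zero q hq k
    have hC := qPoch_ne_zero q hq (M - (k + 1))
    have e1 : (1 : ℂ) - q ^ (k + 1) ≠ 0 := sub_ne_zero.mpr (fun h => (hq (k+1) (by omega) h.symm))
    have e2 : (1 : ℂ) - q ^ (M - (k+1) + 1) ≠ 0 :=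
      sub_ne_zero.mpr (fun h => (hq _ (by omega) h.symm))
    field_simp

def SS (M N : ℕ) : ℂ :=
  ∑ k ∈ Finset.range (N + 1), (-1) ^ k * q ^ TT k * (CC q M k * CC q N k * qPoch q k)

lemma SS_eq (M N : ℕ) : SS q M N = q ^ (M * N) := by
  induction N with
  | zero => simp [SS, TT, CC_zero q hq, qPoch_zero]
  | succ N ih =>
    have key : ∀ k, (-1 : ℂ) ^ (k+1) * q ^ TT (k+1) *
        (CC q M (k+1) * CC q (N+1) (k+1) * qPoch q (k+1))
        = q ^ M * ((-1) ^ k * q ^ TT k * (CC q M k * CC q N k * qPoch q k))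
          + (((-1) ^ (k+1) * q ^ (TT (k+1) + (k+1)) * (CC q M (k+1) * CC q N (k+1) * qPoch q (k+1)))
             - ((-1) ^ k * q ^ (TT k + k) * (CC q M k * CC q N k * qPoch q k))) := by
      intro k
      rcases le_or_gt k M with hkM | hkM
      · have habs := CC_absorb q hq M k
        have hp1 : q ^ TT (k + 1) = q ^ TT k * q ^ k := by rw [TT_succ, pow_add]
        have hp2 : q ^ k * q ^ (M - k) = q ^ M := by rw [← pow_add]; congr 1; omega
        have hp3 : q ^ (TT (k+1) + (k+1)) = q ^ TT k * q ^ k * q ^ (k+1) := by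
          rw [TT_succ, ← pow_add, ← pow_add]
        have hp4 : q ^ (TT k + k) = q ^ TT k * q ^ k := pow_add q _ _
        rw [CC_pascal q hq, hp1, hp3, hp4]
        have expand : CC q M (k+1) * (CC q N k + q ^ (k+1) * CC q N (k+1)) * qPoch q (k+1)
            = (CC q M (k+1) * qPoch q (k+1)) * CC q N k
              + q ^ (k+1) * (CC q M (k+1) * CC q N (k+1) * qPoch q (k+1)) := by ring
        rw [expand, habs]
        linear_combination ((-1:ℂ)^k * q ^ TT k * CC q M k * CC q N k * qPoch q k) * hp2
      · rw [CC_of_gt q (by omega : M < k), CC_of_gt q (by omega : M < k + 1)]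
        ring
    rw [SS, Finset.sum_range_succ']
    have h0 : (-1 : ℂ) ^ 0 * q ^ TT 0 * (CC q M 0 * CC q (N+1) 0 * qPoch q 0) = 1 := by
      simp [TT, CC_zero q hq, qPoch_zero]
    rw [h0]
    rw [Finset.sum_congr rfl (fun k _ => key k), Finset.sum_add_distrib,
      Finset.sum_range_sub (fun k => ((-1:ℂ)) ^ k * q ^ (TT k + k) * (CC q M k * CC q N k * qPoch q k))]
    rw [← Finset.mul_sum]
    have hend : CC q N (N + 1) = 0 := CC_of_gt q (by omega)
    have h00 : (-1 : ℂ) ^ 0 * q ^ (TT 0 + 0) * (CC q M 0 * CC q N 0 * qPoch q 0) = 1 := by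
      simp [TT, CC_zero q hq, qPoch_zero]
    rw [hend, h00, ← SS, ih]
    have : q ^ M * q ^ (M * N) = q ^ (M * (N + 1)) := by rw [← pow_add]; congr 1; ring
    rw [← this]; ring

lemma star (M N : ℕ) :
    ∑ k ∈ Finset.range (N + 1),
        (if k ≤ M then cc q (N - k) * cc q k * cc q (M - k) * q ^ TT k else 0)
      = cc q M * cc q N * q ^ (M * N) := by
  have h1 : ∀ k ∈ Finset.range (N + 1),
      (if k ≤ M then cc q (N - k) * cc q k * cc q (M - k) * q ^ TT k else 0)
      = ((-1) ^ (M + N) / (qPoch q M * qPoch q N)) *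
          ((-1) ^ k * q ^ TT k * (CC q M k * CC q N k * qPoch q k)) := by
    intro k hk
    have hkN : k ≤ N := by simp at hk; omega
    rcases le_or_gt k M with hkM | hkM
    · rw [if_pos hkM, cc, cc, cc, CC, if_pos hkM, CC, if_pos hkN]
      have hs : (-1 : ℂ) ^ (N - k) * (-1) ^ k * (-1) ^ (M - k) * (-1) ^ k = (-1) ^ (M + N) := by
        rw [← pow_add, ← pow_add, ← pow_add]; congr 1; omega
      have hA := qPoch_ne_zero q hq M
      have hB := qPoch_ne_zero q hq N
      have hC := qPoch_ne_zero q hq k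
      have hD := qPoch_ne_zero q hq (M - k)
      have hE := qPoch_ne_zero q hq (N - k)
      rw [← hs]
      field_simp
      have hkk : ((-1 : ℂ)) ^ k * (-1) ^ k = 1 := by
        rw [← pow_add, ← two_mul, pow_mul]; norm_num
      linear_combination (-(q ^ TT k)) * hkk
    · rw [if_neg (by omega), CC_of_gt q hkM]
      ring
  rw [Finset.sum_congr rfl h1, ← Finset.mul_sum, ← SS, SS_eq q hq]
  rw [cc, cc]
  have hs2 : (-1 : ℂ) ^ (M + N) = (-1) ^ M * (-1) ^ N := pow_add _ _ _
  rw [hs2]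
  ring

end Scalar

lemma coeffXmul (s : Fin 2) (f : MvPowerSeries (Fin 2) ℂ) (ν : Fin 2 →₀ ℕ) :
    (MvPowerSeries.X s * f : MvPowerSeries (Fin 2) ℂ) ν
      = if 1 ≤ ν s then f (ν - Finsupp.single s 1) else 0 := by
  have h : (MvPowerSeries.X s * f : MvPowerSeries (Fin 2) ℂ) ν
      = MvPowerSeries.coeff ν (MvPowerSeries.X s * f) := rfl
  rw [h, MvPowerSeries.X, MvPowerSeries.coeff_monomial_mul]
  by_cases hs : Finsupp.single s 1 ≤ ν
  · rw [if_pos hs, if_pos (Finsupp.single_le_iff.mp hs), one_mul, MvPowerSeries.coeff_apply]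
  · rw [if_neg hs, if_neg (fun h1 => hs (Finsupp.single_le_iff.mpr h1))]

lemma degOf_eq (ν : Fin 2 →₀ ℕ) : degOf ν = ν 0 + ν 1 := by
  rw [degOf, Finsupp.sum_fintype _ _ (fun _ => rfl), Fin.sum_univ_two]

lemma coord0 (ν : Fin 2 →₀ ℕ) (m : ℕ) : (ν - Finsupp.single 0 m : Fin 2 →₀ ℕ) 0 = ν 0 - m := by
  rw [Finsupp.tsub_apply, Finsupp.single_eq_same]

lemma coord01 (ν : Fin 2 →₀ ℕ) (m : ℕ) : (ν - Finsupp.single 0 m : Fin 2 →₀ ℕ) 1 = ν 1 := by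
  rw [Finsupp.tsub_apply, Finsupp.single_eq_of_ne (by decide), Nat.sub_zero]

lemma coord10 (ν : Fin 2 →₀ ℕ) (m : ℕ) : (ν - Finsupp.single 1 m : Fin 2 →₀ ℕ) 0 = ν 0 := by
  rw [Finsupp.tsub_apply, Finsupp.single_eq_of_ne (by decide), Nat.sub_zero]

lemma coord11 (ν : Fin 2 →₀ ℕ) (m : ℕ) : (ν - Finsupp.single 1 m : Fin 2 →₀ ℕ) 1 = ν 1 - m := by
  rw [Finsupp.tsub_apply, Finsupp.single_eq_same]

lemma fin2_ext {x y : Fin 2 →₀ ℕ} (h0 : x 0 = y 0) (h1 : x 1 = y 1) : x = y := by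
  ext a
  fin_cases a
  · exact h0
  · exact h1

lemma opB_iter (n : ℕ) : ∀ (f : MvPowerSeries (Fin 2) ℂ) (ν : Fin 2 →₀ ℕ),
    (opB^[n] f) ν = if n ≤ ν 1 then f (ν - Finsupp.single 1 n) else 0 := by
  induction n with
  | zero => intro f ν; simp
  | succ n ih =>
    intro f ν
    rw [Function.iterate_succ_apply, ih]
    by_cases h : n + 1 ≤ ν 1
    · rw [if_pos (by omega : n ≤ ν 1), opB, coeffXmul, coord11, if_pos (by omega), if_pos h]
      congr 1
      rw [tsub_tsub, ← Finsupp.single_add]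
    · by_cases h2 : n ≤ ν 1
      · rw [if_pos h2, opB, coeffXmul, coord11, if_neg (by omega), if_neg h]
      · rw [if_neg h2, if_neg h]

lemma opA_iter (q : ℂ) (n : ℕ) : ∀ (f : MvPowerSeries (Fin 2) ℂ) (ν : Fin 2 →₀ ℕ),
    ((opA q)^[n] f) ν = if n ≤ ν 0 then q ^ (n * ν 1) * f (ν - Finsupp.single 0 n) else 0 := by
  have hbase : ∀ (g : MvPowerSeries (Fin 2) ℂ) (μ : Fin 2 →₀ ℕ),
      (opA q g) μ = if 1 ≤ μ 0 then q ^ (μ 1) * g (μ - Finsupp.single 0 1) else 0 := by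
    intro g μ
    rw [opA, coeffXmul]
    by_cases h : 1 ≤ μ 0
    · rw [if_pos h, if_pos h]
      show q ^ ((μ - Finsupp.single 0 1 : Fin 2 →₀ ℕ) 1) * g (μ - Finsupp.single 0 1) = _
      rw [coord01]
    · rw [if_neg h, if_neg h]
  induction n with
  | zero => intro f ν; simp
  | succ n ih =>
    intro f ν
    rw [Function.iterate_succ_apply, ih]
    by_cases h : n + 1 ≤ ν 0
    · rw [if_pos (by omega : n ≤ ν 0), hbase, coord0, coord01, if_pos (by omega), if_pos h,
        tsub_tsub, ← Finsupp.single_add, ← mul_assoc, ← pow_add]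
      congr 2
      ring
    · by_cases h2 : n ≤ ν 0
      · rw [if_pos h2, hbase, coord0, if_neg (by omega), mul_zero, if_neg h]
      · rw [if_neg h2, if_neg h]

def EE (k j : ℕ) : ℕ := ∑ t ∈ Finset.range k, (j - (t + 1))

lemma EE_succ (k j : ℕ) : EE (k + 1) j = EE k j + (j - (k + 1)) := Finset.sum_range_succ _ _

lemma subsub_comm (ν x y : Fin 2 →₀ ℕ) : ν - x - y = ν - y - x := by
  rw [tsub_tsub, tsub_tsub, add_comm]

lemma opBA_iter (q : ℂ) (k : ℕ) : ∀ (f : MvPowerSeries (Fin 2) ℂ) (ν : Fin 2 →₀ ℕ),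
    ((opB ∘ opA q)^[k] f) ν = if k ≤ ν 0 ∧ k ≤ ν 1 then
      q ^ EE k (ν 1) * f (ν - Finsupp.single 0 k - Finsupp.single 1 k) else 0 := by
  have hbase : ∀ (g : MvPowerSeries (Fin 2) ℂ) (μ : Fin 2 →₀ ℕ),
      ((opB ∘ opA q) g) μ = if 1 ≤ μ 0 ∧ 1 ≤ μ 1 then
        q ^ (μ 1 - 1) * g (μ - Finsupp.single 0 1 - Finsupp.single 1 1) else 0 := by
    intro g μ
    show opB (opA q g) μ = _
    rw [opB, coeffXmul]
    by_cases h1 : 1 ≤ μ 1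
    · rw [if_pos h1, opA, coeffXmul, coord10]
      by_cases h0 : 1 ≤ μ 0
      · rw [if_pos h0, if_pos ⟨h0, h1⟩]
        show q ^ ((μ - Finsupp.single 1 1 - Finsupp.single 0 1 : Fin 2 →₀ ℕ) 1) *
            g (μ - Finsupp.single 1 1 - Finsupp.single 0 1) = _
        rw [coord01, coord11, subsub_comm μ (Finsupp.single 1 1) (Finsupp.single 0 1)]
      · rw [if_neg h0, if_neg (fun hc => h0 hc.1)]
    · rw [if_neg h1, if_neg (fun hc => h1 hc.2)]
  induction k with
  | zero => intro f ν; simp [EE]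
  | succ k ih =>
    intro f ν
    rw [Function.iterate_succ_apply, ih]
    have c0 : (ν - Finsupp.single 0 k - Finsupp.single 1 k : Fin 2 →₀ ℕ) 0 = ν 0 - k := by
      rw [coord10, coord0]
    have c1 : (ν - Finsupp.single 0 k - Finsupp.single 1 k : Fin 2 →₀ ℕ) 1 = ν 1 - k := by
      rw [coord11, coord01]
    by_cases h : k + 1 ≤ ν 0 ∧ k + 1 ≤ ν 1
    · rw [if_pos (⟨by omega, by omega⟩ : k ≤ ν 0 ∧ k ≤ ν 1), hbase, c0, c1,
        if_pos ⟨by omega, by omega⟩, if_pos h, ← mul_assoc, ← pow_add]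
      congr 2
      · rw [EE_succ]; omega
      · apply fin2_ext <;> simp only [coord0, coord01, coord10, coord11] <;> omega
    · by_cases h2 : k ≤ ν 0 ∧ k ≤ ν 1
      · rw [if_pos h2, hbase, c0, c1, if_neg (by omega), mul_zero, if_neg h]
      · rw [if_neg h2, if_neg h]

lemma shift_sum (d k : ℕ) (hk : k ≤ d) (φ : ℕ → ℂ) (hφ : ∀ n, d < n + k → φ n = 0) :
    (∑ n ∈ Finset.range (d + 1), φ n)
      = ∑ N ∈ Finset.range (d + 1), if k ≤ N then φ (N - k) else 0 := by
  have h1 : (∑ N ∈ Finset.range (d + 1), if k ≤ N then φ (N - k) else 0)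
      = ∑ N ∈ (Finset.range (d + 1)).filter (fun N => k ≤ N), φ (N - k) :=
    (Finset.sum_filter _ _).symm
  have h2 : (Finset.range (d + 1)).filter (fun N => k ≤ N) = Finset.Ico k (d + 1) := by
    ext x
    simp only [Finset.mem_filter, Finset.mem_range, Finset.mem_Ico]
    omega
  rw [h1, h2, Finset.sum_Ico_eq_sum_range]
  have h3 : ∀ t, k + t - k = t := fun t => by omega
  have h4 : (∑ t ∈ Finset.range (d + 1 - k), φ (k + t - k))
      = ∑ t ∈ Finset.range (d + 1 - k), φ t :=
    Finset.sum_congr rfl fun t _ => by rw [h3]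
  rw [h4]
  exact (Finset.sum_subset (Finset.range_subset_range.mpr (by omega))
    (fun x _ hx => hφ x (by simp only [Finset.mem_range] at hx; omega))).symm

lemma TT_gauss (k : ℕ) : 2 * TT k + k = k * k := by
  induction k with
  | zero => simp [TT]
  | succ k ih =>
    rw [TT_succ, show (k+1) * (k+1) = k * k + 2 * k + 1 by ring, ← ih]
    ring

lemma EE_add (k : ℕ) : ∀ j, k ≤ j → EE k j + (TT k + k) = k * j := by
  induction k with
  | zero => intro j _; simp [EE, TT]
  | succ k ih =>
    intro j hj
    rw [EE_succ, TT_succ]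
    have h := ih j (by omega)
    have hm : (k + 1) * j = k * j + j := by ring
    rw [hm, ← h]
    omega

lemma expo (M N k j : ℕ) (hkM : k ≤ M) (hkN : k ≤ N) (hNj : N ≤ j) :
    EE k (j - (N - k)) + (M - k) * ((j - (N - k)) - k) + M * N = M * j + TT k := by
  have h1 : j - (N - k) = (j - N) + k := by omega
  rw [h1]
  have hEE := EE_add k ((j - N) + k) (by omega)
  have hG := TT_gauss k
  have h3 : (j - N) + k - k = j - N := by omega
  rw [h3]
  obtain ⟨u, rfl⟩ : ∃ u, j = N + u := ⟨j - N, by omega⟩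
  obtain ⟨m', rfl⟩ : ∃ m', M = k + m' := ⟨M - k, by omega⟩
  obtain ⟨n', rfl⟩ : ∃ n', N = k + n' := ⟨N - k, by omega⟩
  have h4 : k + n' + u - (k + n') = u := by omega
  rw [h4] at hEE ⊢
  have h5 : k + m' - k = m' := by omega
  rw [h5]
  zify at hEE hG ⊢
  linear_combination hEE - hG


lemma eqExp_apply (q : ℂ) (T : MvPowerSeries (Fin 2) ℂ → MvPowerSeries (Fin 2) ℂ)
    (f : MvPowerSeries (Fin 2) ℂ) (ν : Fin 2 →₀ ℕ) :
    eqExp q T f ν = ∑ n ∈ Finset.range (degOf ν + 1), cc q n * (T^[n] f) ν := rfl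

lemma LHS_eq (q : ℂ) (f : MvPowerSeries (Fin 2) ℂ) (ν : Fin 2 →₀ ℕ) :
    eqExp q (opA q) (eqExp q opB f) ν
      = ∑ M ∈ Finset.range (degOf ν + 1), ∑ N ∈ Finset.range (degOf ν + 1),
          (if M ≤ ν 0 ∧ N ≤ ν 1 then
            cc q M * cc q N * q ^ (M * ν 1) * f (ν - Finsupp.single 0 M - Finsupp.single 1 N)
          else 0) := by
  rw [eqExp_apply]
  refine Finset.sum_congr rfl fun m hm => ?_
  rw [opA_iter]
  by_cases hmi : m ≤ ν 0
  · rw [if_pos hmi, eqExp_apply]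
    have hdeg : degOf (ν - Finsupp.single 0 m) + 1 ≤ degOf ν + 1 := by
      rw [degOf_eq, degOf_eq, coord0, coord01]; omega
    have hz : ∀ n ∈ Finset.range (degOf ν + 1),
        n ∉ Finset.range (degOf (ν - Finsupp.single 0 m) + 1) →
        cc q n * (opB^[n] f) (ν - Finsupp.single 0 m) = 0 := by
      intro n hn hnot
      simp only [Finset.mem_range] at hn hnot
      have h2 : degOf (ν - Finsupp.single 0 m) < n := by omega
      rw [degOf_eq, coord0, coord01] at h2
      rw [opB_iter, coord01, if_neg (by omega), mul_zero]
    rw [Finset.sum_subset (Finset.range_subset_range.mpr hdeg) hz, Finset.mul_sum, Finset.mul_sum]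
    refine Finset.sum_congr rfl fun n hn => ?_
    rw [opB_iter, coord01]
    by_cases hnj : n ≤ ν 1
    · rw [if_pos hnj, if_pos ⟨hmi, hnj⟩]
      ring
    · rw [if_neg hnj, if_neg (fun hc => hnj hc.2)]
      ring
  · rw [if_neg hmi, mul_zero]
    symm
    refine Finset.sum_eq_zero fun N _ => ?_
    rw [if_neg (fun hc => hmi hc.1)]


lemma RHS_eq (q : ℂ) (hq0 : q ≠ 0) (hq : ∀ n : ℕ, 0 < n → q ^ n ≠ 1)
    (f : MvPowerSeries (Fin 2) ℂ) (ν : Fin 2 →₀ ℕ) :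
    eqExp q opB (eqExp q (opB ∘ opA q) (eqExp q (opA q) f)) ν
      = ∑ M ∈ Finset.range (degOf ν + 1), ∑ N ∈ Finset.range (degOf ν + 1),
          (if M ≤ ν 0 ∧ N ≤ ν 1 then
            cc q M * cc q N * q ^ (M * ν 1) * f (ν - Finsupp.single 0 M - Finsupp.single 1 N)
          else 0) := by
  have hd : degOf ν = ν 0 + ν 1 := degOf_eq ν
  set R : ℕ → ℕ → ℕ → ℂ := fun n k m =>
    if n ≤ ν 1 ∧ k ≤ ν 0 ∧ k ≤ ν 1 - n ∧ m ≤ ν 0 - k then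
      cc q n * (cc q k * (cc q m * (q ^ EE k (ν 1 - n) * (q ^ (m * (ν 1 - n - k)) *
        f (ν - Finsupp.single 1 n - Finsupp.single 0 k - Finsupp.single 1 k -
            Finsupp.single 0 m)))))
    else 0 with hR
  have step1 : eqExp q opB (eqExp q (opB ∘ opA q) (eqExp q (opA q) f)) ν
      = ∑ n ∈ Finset.range (degOf ν + 1), ∑ k ∈ Finset.range (degOf ν + 1),
          ∑ m ∈ Finset.range (degOf ν + 1), R n k m := by
    rw [eqExp_apply]
    refine Finset.sum_congr rfl fun n hn => ?_
    rw [opB_iter]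
    by_cases hn1 : n ≤ ν 1
    · rw [if_pos hn1, eqExp_apply]
      have d1 : degOf (ν - Finsupp.single 1 n) + 1 ≤ degOf ν + 1 := by
        rw [degOf_eq, coord10, coord11]; omega
      have hz1 : ∀ k ∈ Finset.range (degOf ν + 1),
          k ∉ Finset.range (degOf (ν - Finsupp.single 1 n) + 1) →
          cc q k * ((opB ∘ opA q)^[k] (eqExp q (opA q) f)) (ν - Finsupp.single 1 n) = 0 := by
        intro k hk hknot
        simp only [Finset.mem_range] at hk hknot
        have h2 : degOf (ν - Finsupp.single 1 n) < k := by omega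
        rw [degOf_eq, coord10, coord11] at h2
        rw [opBA_iter, coord10, coord11, if_neg (by omega), mul_zero]
      rw [Finset.sum_subset (Finset.range_subset_range.mpr d1) hz1, Finset.mul_sum]
      refine Finset.sum_congr rfl fun k hk => ?_
      rw [opBA_iter, coord10, coord11]
      by_cases hk1 : k ≤ ν 0 ∧ k ≤ ν 1 - n
      · rw [if_pos hk1, eqExp_apply]
        have c20 : (ν - Finsupp.single 1 n - Finsupp.single 0 k - Finsupp.single 1 k
            : Fin 2 →₀ ℕ) 0 = ν 0 - k := by
          rw [coord10, coord0, coord10]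
        have c21 : (ν - Finsupp.single 1 n - Finsupp.single 0 k - Finsupp.single 1 k
            : Fin 2 →₀ ℕ) 1 = ν 1 - n - k := by
          rw [coord11, coord01, coord11]
        have d2 : degOf (ν - Finsupp.single 1 n - Finsupp.single 0 k - Finsupp.single 1 k) + 1
            ≤ degOf ν + 1 := by
          rw [degOf_eq, c20, c21]; omega
        have hz2 : ∀ m ∈ Finset.range (degOf ν + 1),
            m ∉ Finset.range (degOf (ν - Finsupp.single 1 n - Finsupp.single 0 k -
              Finsupp.single 1 k) + 1) →
            cc q m * ((opA q)^[m] f)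
              (ν - Finsupp.single 1 n - Finsupp.single 0 k - Finsupp.single 1 k) = 0 := by
          intro m hm hmnot
          simp only [Finset.mem_range] at hm hmnot
          have h2 : degOf (ν - Finsupp.single 1 n - Finsupp.single 0 k - Finsupp.single 1 k)
              < m := by omega
          rw [degOf_eq, c20, c21] at h2
          rw [opA_iter, c20, if_neg (by omega), mul_zero]
        rw [Finset.sum_subset (Finset.range_subset_range.mpr d2) hz2, Finset.mul_sum,
          Finset.mul_sum, Finset.mul_sum]
        refine Finset.sum_congr rfl fun m hm => ?_
        rw [opA_iter, c20, c21]
        simp only [hR]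
        by_cases hm1 : m ≤ ν 0 - k
        · rw [if_pos hm1, if_pos ⟨hn1, hk1.1, hk1.2, hm1⟩]
          ring
        · rw [if_neg hm1, if_neg (fun hc => hm1 hc.2.2.2)]
          ring
      · rw [if_neg hk1, mul_zero, mul_zero]
        symm
        refine Finset.sum_eq_zero fun m _ => ?_
        simp only [hR]
        exact if_neg (fun hc => hk1 ⟨hc.2.1, hc.2.2.1⟩)
    · rw [if_neg hn1, mul_zero]
      symm
      refine Finset.sum_eq_zero fun k _ => Finset.sum_eq_zero fun m _ => ?_
      simp only [hR]
      exact if_neg (fun hc => hn1 hc.1)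
  have hRm : ∀ n k m, degOf ν < m + k → R n k m = 0 := by
    intro n k m h
    simp only [hR]
    rw [if_neg]
    intro hc
    omega
  have hRn : ∀ n k m, degOf ν < n + k → R n k m = 0 := by
    intro n k m h
    simp only [hR]
    rw [if_neg]
    intro hc
    omega
  have step2 : ∀ k ∈ Finset.range (degOf ν + 1),
      (∑ n ∈ Finset.range (degOf ν + 1), ∑ m ∈ Finset.range (degOf ν + 1), R n k m)
      = ∑ N ∈ Finset.range (degOf ν + 1), (if k ≤ N then
          (∑ M ∈ Finset.range (degOf ν + 1), if k ≤ M then R (N - k) k (M - k) else 0)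
        else 0) := by
    intro k hk
    simp only [Finset.mem_range] at hk
    have hkd : k ≤ degOf ν := by omega
    have e1 : ∀ n, (∑ m ∈ Finset.range (degOf ν + 1), R n k m)
        = ∑ M ∈ Finset.range (degOf ν + 1), if k ≤ M then R n k (M - k) else 0 :=
      fun n => shift_sum _ k hkd _ (fun m hm => hRm n k m hm)
    calc (∑ n ∈ Finset.range (degOf ν + 1), ∑ m ∈ Finset.range (degOf ν + 1), R n k m)
        = ∑ n ∈ Finset.range (degOf ν + 1), ∑ M ∈ Finset.range (degOf ν + 1),
            (if k ≤ M then R n k (M - k) else 0) := Finset.sum_congr rfl fun n _ => e1 n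
      _ = _ := by
          refine shift_sum _ k hkd _ (fun n hn => ?_)
          refine Finset.sum_eq_zero fun M _ => ?_
          split_ifs with h
          · exact hRn _ k _ hn
          · rfl
  have step4 : ∀ M ∈ Finset.range (degOf ν + 1), ∀ N ∈ Finset.range (degOf ν + 1),
      (∑ k ∈ Finset.range (degOf ν + 1),
        (if k ≤ N then if k ≤ M then R (N - k) k (M - k) else 0 else 0))
      = if M ≤ ν 0 ∧ N ≤ ν 1 then
          cc q M * cc q N * q ^ (M * ν 1) * f (ν - Finsupp.single 0 M - Finsupp.single 1 N)
        else 0 := by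
    intro M hM N hN
    by_cases hMN : M ≤ ν 0 ∧ N ≤ ν 1
    · obtain ⟨hM0, hN1⟩ := hMN
      rw [if_pos ⟨hM0, hN1⟩]
      refine mul_right_cancel₀ (pow_ne_zero (M * N) hq0) ?_
      rw [Finset.sum_mul]
      have harg : ∀ k, k ≤ M → k ≤ N →
          ν - Finsupp.single 1 (N - k) - Finsupp.single 0 k - Finsupp.single 1 k -
              Finsupp.single 0 (M - k)
            = ν - Finsupp.single 0 M - Finsupp.single 1 N := by
        intro k h1 h2
        apply fin2_ext <;> simp only [coord0, coord01, coord10, coord11] <;> omega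
      have tstep : ∀ k ∈ Finset.range (degOf ν + 1),
          (if k ≤ N then if k ≤ M then R (N - k) k (M - k) else 0 else 0) * q ^ (M * N)
          = (if k ≤ M ∧ k ≤ N then cc q (N - k) * cc q k * cc q (M - k) * q ^ TT k else 0) *
              (q ^ (M * ν 1) * f (ν - Finsupp.single 0 M - Finsupp.single 1 N)) := by
        intro k hk
        by_cases h1 : k ≤ N
        · by_cases h2 : k ≤ M
          · rw [if_pos h1, if_pos h2, if_pos ⟨h2, h1⟩]
            simp only [hR]
            rw [if_pos ⟨by omega, by omega, by omega, by omega⟩, harg k h2 h1]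
            have hexp := expo M N k (ν 1) h2 h1 hN1
            have hq1 : q ^ EE k (ν 1 - (N - k)) * q ^ ((M - k) * (ν 1 - (N - k) - k)) *
                q ^ (M * N) = q ^ TT k * q ^ (M * ν 1) := by
              rw [← pow_add, ← pow_add, ← pow_add]
              congr 1
              omega
            linear_combination (cc q (N - k) * cc q k * cc q (M - k) *
              f (ν - Finsupp.single 0 M - Finsupp.single 1 N)) * hq1
          · rw [if_pos h1, if_neg h2, if_neg (fun hc => h2 hc.1), zero_mul, zero_mul]
        · rw [if_neg h1, if_neg (fun hc => h1 hc.2), zero_mul, zero_mul]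
      rw [Finset.sum_congr rfl tstep, ← Finset.sum_mul]
      have hkey : (∑ k ∈ Finset.range (degOf ν + 1),
          if k ≤ M ∧ k ≤ N then cc q (N - k) * cc q k * cc q (M - k) * q ^ TT k else 0)
          = cc q M * cc q N * q ^ (M * N) := by
        have hsub : Finset.range (N + 1) ⊆ Finset.range (degOf ν + 1) :=
          Finset.range_subset_range.mpr (by omega)
        have hz : ∀ x ∈ Finset.range (degOf ν + 1), x ∉ Finset.range (N + 1) →
            (if x ≤ M ∧ x ≤ N then cc q (N - x) * cc q x * cc q (M - x) * q ^ TT x else 0)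
              = 0 := by
          intro x _ hx
          simp only [Finset.mem_range] at hx
          rw [if_neg (by omega : ¬(x ≤ M ∧ x ≤ N))]
        have hcong : ∀ k ∈ Finset.range (N + 1),
            (if k ≤ M ∧ k ≤ N then cc q (N - k) * cc q k * cc q (M - k) * q ^ TT k else 0)
            = (if k ≤ M then cc q (N - k) * cc q k * cc q (M - k) * q ^ TT k else 0) := by
          intro k hk
          simp only [Finset.mem_range] at hk
          by_cases h2 : k ≤ M
          · rw [if_pos ⟨h2, by omega⟩, if_pos h2]
          · rw [if_neg (fun hc => h2 hc.1), if_neg h2]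
        rw [← Finset.sum_subset hsub hz, Finset.sum_congr rfl hcong, star q hq M N]
      rw [hkey]
      ring
    · rw [if_neg hMN]
      refine Finset.sum_eq_zero fun k hk => ?_
      by_cases h1 : k ≤ N
      · by_cases h2 : k ≤ M
        · rw [if_pos h1, if_pos h2]
          simp only [hR]
          rw [if_neg]
          intro hc
          exact hMN ⟨by omega, by omega⟩
        · rw [if_pos h1, if_neg h2]
      · rw [if_neg h1]
  have hswap : ∀ (c : Prop) [inst : Decidable c] (g : ℕ → ℂ),
      (if c then ∑ M ∈ Finset.range (degOf ν + 1), g M else 0)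
        = ∑ M ∈ Finset.range (degOf ν + 1), (if c then g M else 0) := by
    intro c inst g
    split_ifs
    · rfl
    · rw [Finset.sum_const_zero]
  rw [step1]
  calc (∑ n ∈ Finset.range (degOf ν + 1), ∑ k ∈ Finset.range (degOf ν + 1),
          ∑ m ∈ Finset.range (degOf ν + 1), R n k m)
      = ∑ k ∈ Finset.range (degOf ν + 1), ∑ n ∈ Finset.range (degOf ν + 1),
          ∑ m ∈ Finset.range (degOf ν + 1), R n k m := Finset.sum_comm
    _ = ∑ k ∈ Finset.range (degOf ν + 1), ∑ N ∈ Finset.range (degOf ν + 1),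
          (if k ≤ N then
            (∑ M ∈ Finset.range (degOf ν + 1), if k ≤ M then R (N - k) k (M - k) else 0)
          else 0) := Finset.sum_congr rfl step2
    _ = ∑ k ∈ Finset.range (degOf ν + 1), ∑ N ∈ Finset.range (degOf ν + 1),
          ∑ M ∈ Finset.range (degOf ν + 1),
            (if k ≤ N then if k ≤ M then R (N - k) k (M - k) else 0 else 0) := by
        refine Finset.sum_congr rfl fun k _ => Finset.sum_congr rfl fun N _ => ?_
        rw [hswap]
    _ = ∑ N ∈ Finset.range (degOf ν + 1), ∑ k ∈ Finset.range (degOf ν + 1),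
          ∑ M ∈ Finset.range (degOf ν + 1),
            (if k ≤ N then if k ≤ M then R (N - k) k (M - k) else 0 else 0) :=
        Finset.sum_comm
    _ = ∑ N ∈ Finset.range (degOf ν + 1), ∑ M ∈ Finset.range (degOf ν + 1),
          ∑ k ∈ Finset.range (degOf ν + 1),
            (if k ≤ N then if k ≤ M then R (N - k) k (M - k) else 0 else 0) :=
        Finset.sum_congr rfl fun N _ => Finset.sum_comm
    _ = ∑ N ∈ Finset.range (degOf ν + 1), ∑ M ∈ Finset.range (degOf ν + 1),
          (if M ≤ ν 0 ∧ N ≤ ν 1 then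
            cc q M * cc q N * q ^ (M * ν 1) * f (ν - Finsupp.single 0 M - Finsupp.single 1 N)
          else 0) :=
        Finset.sum_congr rfl fun N hN => Finset.sum_congr rfl fun M hM => step4 M hM N hN
    _ = ∑ M ∈ Finset.range (degOf ν + 1), ∑ N ∈ Finset.range (degOf ν + 1),
          (if M ≤ ν 0 ∧ N ≤ ν 1 then
            cc q M * cc q N * q ^ (M * ν 1) * f (ν - Finsupp.single 0 M - Finsupp.single 1 N)
          else 0) := Finset.sum_comm

end Pent

/-- **Pentagon identity** (Proposition 2.1):
`e_q(−a) ∘ e_q(−b) = e_q(−b) ∘ e_q(−(b∘a)) ∘ e_q(−a)`. -/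
theorem pentagon_identity (q : ℂ) (hq0 : q ≠ 0) (hq : ∀ n : ℕ, 0 < n → q ^ n ≠ 1)
    (hab : opA q ∘ opB = fun f => q • opB (opA q f)) :
    eqExp q (opA q) ∘ eqExp q opB
      = eqExp q opB ∘ eqExp q (opB ∘ opA q) ∘ eqExp q (opA q) := by
  funext f
  funext ν
  exact (Pent.LHS_eq q f ν).trans (Pent.RHS_eq q hq0 hq f ν).symm
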